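/- In G(2e,e,2) with e ≥ 3, let r = (0,0 | (1 2)), s = (-1,1 | (1 2)), t = (e,0 | id), v = (rs)^{e-1} r t, w_{2i} = (rs)^i and w_{2i+1} = (rs)^i r for 0 ≤ i < e. If 0 ≤ m < 4, 0 ≤ i,j < 2e, and v^m w_i = w_j, then m = 0 and i = j. Hence the 8e elements v^m w_i are pairwise distinct and exhaust G(2e,e,2), so the edge sequence [[r,s]^{e-1}, r, t] repeated 4 times yields a Hamiltonian cycle in the Cayley graph Γ(G(2e,e,2), {r,s,t}). -/

import Mathlib

/-- The wreath product `ZMod m ≀ Sₙ`: elements `(a | σ)` with `a : Fin n → ZMod m`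
and `σ` a permutation of `{1,…,n}` (i.e. of `Fin n`). -/
structure W (m n : ℕ) : Type where
  a : Fin n → ZMod m
  p : Equiv.Perm (Fin n)

namespace W

lemma ext' {m n : ℕ} {x y : W m n} (h1 : x.a = y.a) (h2 : x.p = y.p) : x = y := by
  cases x; cases y; cases h1; cases h2; rfl

instance (m n : ℕ) : Mul (W m n) :=
  ⟨fun x y => ⟨fun i => x.a i + y.a (x.p i), y.p * x.p⟩⟩

instance (m n : ℕ) : One (W m n) := ⟨⟨0, 1⟩⟩

instance (m n : ℕ) : Inv (W m n) :=
  ⟨fun x => ⟨fun i => -(x.a (x.p.symm i)), x.p⁻¹⟩⟩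

lemma mul_def {m n : ℕ} (x y : W m n) :
    x * y = ⟨fun i => x.a i + y.a (x.p i), y.p * x.p⟩ := rfl

lemma one_def {m n : ℕ} : (1 : W m n) = ⟨0, 1⟩ := rfl

lemma inv_def {m n : ℕ} (x : W m n) :
    x⁻¹ = ⟨fun i => -(x.a (x.p.symm i)), x.p⁻¹⟩ := rfl

/-- The wreath product group structure, with multiplication
`(a | σ)(b | τ) = (aᵢ + b_{σ(i)} | στ)` (where `στ` means: apply `σ` first). -/
instance (m n : ℕ) : Group (W m n) where
  mul_assoc x y z := by
    refine ext' (funext fun i => ?_) ?_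
    · show (x.a i + y.a (x.p i)) + z.a ((y.p * x.p) i)
        = x.a i + (y.a (x.p i) + z.a (y.p (x.p i)))
      simp [Equiv.Perm.mul_apply, add_assoc]
    · show (z.p * (y.p * x.p)) = (z.p * y.p) * x.p
      exact (mul_assoc _ _ _).symm
  one_mul x := by
    refine ext' (funext fun i => ?_) ?_
    · show 0 + x.a ((1 : Equiv.Perm (Fin _)) i) = x.a i; simp
    · show x.p * 1 = x.p; simp
  mul_one x := by
    refine ext' (funext fun i => ?_) ?_
    · show x.a i + 0 = x.a i; simp
    · show 1 * x.p = x.p; simp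
  inv_mul_cancel x := by
    refine ext' (funext fun i => ?_) ?_
    · simp [mul_def, inv_def, one_def, Equiv.Perm.inv_def]
    · simp [mul_def, inv_def, one_def, Equiv.Perm.inv_def]
      exact mul_inv_cancel x.p

end W

/-- The subgroup of `ZMod m ≀ Sₙ` of elements whose diagonal entries sum to `0 mod e`.
For `m = d*e` this is the imprimitive complex reflection group `G(de,e,n)`. -/
def Gsub (m e n : ℕ) (h : e ∣ m) : Subgroup (W m n) where
  carrier := {x | ZMod.castHom h (ZMod e) (∑ i, x.a i) = 0}
  one_mem' := by simp [W.one_def]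
  mul_mem' := by
    intro x y hx hy
    show ZMod.castHom h (ZMod e) (∑ i, (x.a i + y.a (x.p i))) = 0
    rw [Finset.sum_add_distrib, Equiv.sum_comp x.p y.a, map_add]
    rw [Set.mem_setOf_eq] at hx hy
    rw [hx, hy, add_zero]
  inv_mem' := by
    intro x hx
    show ZMod.castHom h (ZMod e) (∑ i, -(x.a (x.p.symm i))) = 0
    rw [Finset.sum_neg_distrib, Equiv.sum_comp x.p.symm x.a, map_neg]
    rw [Set.mem_setOf_eq] at hx
    rw [hx, neg_zero]

lemma mem_Gsub {m e n : ℕ} (h : e ∣ m) (x : W m n) :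
    x ∈ Gsub m e n h ↔ ZMod.castHom h (ZMod e) (∑ i, x.a i) = 0 := Iff.rfl

/-- The imprimitive complex reflection group `G(de,e,n)`. -/
abbrev Gde (d e n : ℕ) : Subgroup (W (d * e) n) := Gsub (d * e) e n (dvd_mul_left e d)

/-- A Hamiltonian cycle in the (undirected, right) Cayley graph `Γ(G,S)`,
encoded as the list of edge labels (from `S ∪ S⁻¹`) along the cycle starting at `1`:
the partial products visit every element of `G` exactly once and the
total product returns to `1`. -/
def IsHamCycle {G : Type*} [Group G] (S : Set G) (l : List G) : Prop :=
  (∀ x ∈ l, x ∈ S ∨ x⁻¹ ∈ S) ∧ l.prod = 1 ∧ l.length = Nat.card G ∧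
    ((List.range l.length).map fun k => (l.take k).prod).Nodup

namespace W

variable {N : ℕ}

def E (a b : ZMod N) (σ : Equiv.Perm (Fin 2)) : W N 2 := ⟨![a, b], σ⟩

lemma E_mul_one (a b c d : ZMod N) (τ : Equiv.Perm (Fin 2)) :
    E a b 1 * E c d τ = E (a + c) (b + d) τ := by
  refine ext' (funext fun i => ?_) ?_
  · fin_cases i <;> simp [E, mul_def]
  · simp [E, mul_def]

lemma E_mul_swap (a b c d : ZMod N) (τ : Equiv.Perm (Fin 2)) :
    E a b (Equiv.swap 0 1) * E c d τ = E (a + d) (b + c) (τ * Equiv.swap 0 1) := by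
  refine ext' (funext fun i => ?_) ?_
  · fin_cases i <;> simp [E, mul_def]
  · simp [E, mul_def]

lemma E_one : (E 0 0 1 : W N 2) = 1 := by
  refine ext' (funext fun i => ?_) ?_
  · fin_cases i <;> simp [E, one_def]
  · simp [E, one_def]

lemma E_inj {a b c d : ZMod N} {σ τ : Equiv.Perm (Fin 2)} (h : E a b σ = E c d τ) :
    a = c ∧ b = d ∧ σ = τ := by
  refine ⟨?_, ?_, congrArg W.p h⟩
  · have := congrFun (congrArg W.a h) 0; simpa [E] using this
  · have := congrFun (congrArg W.a h) 1; simpa [E] using this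

lemma E_pow_one (a b : ZMod N) (n : ℕ) :
    (E a b 1) ^ n = E (n • a) (n • b) 1 := by
  induction n with
  | zero => simpa using E_one.symm
  | succ k ih =>
    rw [pow_succ, ih, E_mul_one]
    congr 1 <;> rw [succ_nsmul]

lemma perm_fin_two (σ : Equiv.Perm (Fin 2)) : σ = 1 ∨ σ = Equiv.swap 0 1 := by
  revert σ; decide

end W
namespace W
variable {N : ℕ}
@[simp] lemma E_apply0 (a b : ZMod N) (σ : Equiv.Perm (Fin 2)) : (E a b σ).a 0 = a := rfl
@[simp] lemma E_apply1 (a b : ZMod N) (σ : Equiv.Perm (Fin 2)) : (E a b σ).a 1 = b := rfl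
@[simp] lemma E_p (a b : ZMod N) (σ : Equiv.Perm (Fin 2)) : (E a b σ).p = σ := rfl
end W

namespace W
lemma E_ext {N : ℕ} {a b c d : ZMod N} {σ τ : Equiv.Perm (Fin 2)}
    (h1 : a = c) (h2 : b = d) (h3 : σ = τ) : E a b σ = E c d τ := by
  subst h1; subst h2; subst h3; rfl
end W
open scoped Classical in
/-- decode an element of `W (2*e) 2` into its `(m, k)` index. -/
noncomputable def dec (e : ℕ) (x : W (2*e) 2) : ℕ × ℕ :=
  let m : ℕ := (if x.a 0 + x.a 1 = 0 then 0 else 1) + (if (x.a 0).val < e then 0 else 2)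
  let kp : ℕ := if x.p = 1 then m % 2 else 1 - m % 2
  let i : ℕ := if (x.a 0).val < e
    then (if x.a 0 + x.a 1 = 0 then (x.a 0).val else e - 1 - (x.a 0).val)
    else (if x.a 0 + x.a 1 = 0 then (x.a 0).val - e else 2*e - 1 - (x.a 0).val)
  (m, 2*i + kp)

lemma zmod_sum_cases {e : ℕ} (he : 0 < e) (z : ZMod (2*e))
    (hz : ZMod.castHom (dvd_mul_left e 2) (ZMod e) z = 0) :
    z = 0 ∨ z = (e : ZMod (2*e)) := by
  haveI : NeZero (2*e) := ⟨by omega⟩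
  have h1 : (z.val : ZMod e) = 0 := by
    rwa [ZMod.castHom_apply, ← ZMod.natCast_val] at hz
  have h2 : e ∣ z.val := (ZMod.natCast_eq_zero_iff _ _).mp h1
  have h3 : z.val < 2*e := ZMod.val_lt z
  have h4 : (z.val : ZMod (2*e)) = z := by rw [ZMod.natCast_val, ZMod.cast_id]
  obtain ⟨c, hc⟩ := h2
  have hc2 : c = 0 ∨ c = 1 := by
    rcases Nat.lt_or_ge c 2 with h | h
    · omega
    · exfalso; have := Nat.mul_le_mul_left e h; omega
  rcases hc2 with rfl | rfl
  · left; rw [← h4, hc]; simp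
  · right; rw [← h4, hc]; simp

lemma flatten_replicate_length {α : Type*} (n : ℕ) (l : List α) :
    (List.flatten (List.replicate n l)).length = n * l.length := by
  induction n with
  | zero => simp
  | succ k ih => simp [List.replicate_succ, ih, Nat.succ_mul, Nat.add_comm]

lemma flatten_replicate_prod {G : Type*} [Monoid G] (n : ℕ) (l : List G) :
    (List.flatten (List.replicate n l)).prod = l.prod ^ n := by
  induction n with
  | zero => simp
  | succ k ih => rw [List.replicate_succ, List.flatten_cons, List.prod_append, ih, pow_succ']

lemma take_even {α : Type*} (a b : α) : ∀ (i n : ℕ), i ≤ n →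
    (List.flatten (List.replicate n [a,b])).take (2*i) = List.flatten (List.replicate i [a,b]) := by
  intro i
  induction i with
  | zero => simp
  | succ k ih =>
    intro n hn
    obtain ⟨m, rfl⟩ : ∃ m, n = m + 1 := ⟨n - 1, by omega⟩
    rw [List.replicate_succ, List.flatten_cons, List.replicate_succ, List.flatten_cons]
    show (a :: b :: _).take (2*(k+1)) = a :: b :: _
    have h2 : 2*(k+1) = (2*k) + 1 + 1 := by ring
    rw [h2, List.take_succ_cons, List.take_succ_cons]
    simpa using ih m (by omega)

lemma take_odd {α : Type*} (a b : α) : ∀ (i n : ℕ), i < n →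
    (List.flatten (List.replicate n [a,b])).take (2*i+1)
      = List.flatten (List.replicate i [a,b]) ++ [a] := by
  intro i
  induction i with
  | zero =>
    intro n hn
    obtain ⟨m, rfl⟩ : ∃ m, n = m + 1 := ⟨n - 1, by omega⟩
    rw [List.replicate_succ, List.flatten_cons]
    simp
  | succ k ih =>
    intro n hn
    obtain ⟨m, rfl⟩ : ∃ m, n = m + 1 := ⟨n - 1, by omega⟩
    rw [List.replicate_succ, List.flatten_cons, List.replicate_succ, List.flatten_cons]
    show (a :: b :: _).take (2*(k+1)+1) = a :: b :: _
    have h2 : 2*(k+1)+1 = (2*k+1) + 1 + 1 := by ring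
    rw [h2, List.take_succ_cons, List.take_succ_cons]
    simpa using ih m (by omega)

lemma take_flatten_replicate {α : Type*} (B : List α) : ∀ (q n j : ℕ), q < n → j ≤ B.length →
    (List.flatten (List.replicate n B)).take (q * B.length + j)
      = List.flatten (List.replicate q B) ++ B.take j := by
  intro q
  induction q with
  | zero =>
    intro n j hq hj
    obtain ⟨m, rfl⟩ : ∃ m, n = m + 1 := ⟨n - 1, by omega⟩
    rw [List.replicate_succ, List.flatten_cons]
    rw [List.take_append]
    simp [Nat.sub_eq_zero_of_le hj]
  | succ k ih =>
    intro n j hq hj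
    obtain ⟨m, rfl⟩ : ∃ m, n = m + 1 := ⟨n - 1, by omega⟩
    rw [List.replicate_succ, List.flatten_cons]
    have h1 : (k+1) * B.length + j = B.length + (k * B.length + j) := by ring
    rw [h1, List.take_append, List.take_of_length_le (by omega),
      Nat.add_sub_cancel_left, ih m j (by omega) hj, List.replicate_succ,
      List.flatten_cons, List.append_assoc]


/-- Lemma 4.2. In `G(2e,e,2)` with `e ≥ 3`, with
`r = (0,0 | (1 2))`, `s = (-1,1 | (1 2))`, `t = (e,0 | id)`, `v = (rs)^(e-1) r t`,
`w_(2i) = (rs)ⁱ` and `w_(2i+1) = (rs)ⁱ r`: if `0 ≤ m < 4`, `0 ≤ i,j < 2e` and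
`v^m wᵢ = w_j` then `m = 0 ∧ i = j`; hence the `8e` elements `v^m wᵢ` are pairwise
distinct and exhaust `G(2e,e,2)`, so the edge sequence `[[r,s]^(e-1), r, t]` repeated
`4` times yields a Hamiltonian cycle in `Γ(G(2e,e,2), {r,s,t})`. -/
theorem stmt4 (e : ℕ) (he : 3 ≤ e)
    (r s t : Gde 2 e 2)
    (hr : (r : W (2 * e) 2) = ⟨![0, 0], Equiv.swap 0 1⟩)
    (hs : (s : W (2 * e) 2) = ⟨![-1, 1], Equiv.swap 0 1⟩)
    (ht : (t : W (2 * e) 2) = ⟨![(e : ZMod (2 * e)), 0], 1⟩)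
    (v : Gde 2 e 2) (hv : v = (r * s) ^ (e - 1) * r * t)
    (w : ℕ → Gde 2 e 2)
    (hw1 : ∀ i, w (2 * i) = (r * s) ^ i)
    (hw2 : ∀ i, w (2 * i + 1) = (r * s) ^ i * r) :
    (∀ m < 4, ∀ i < 2 * e, ∀ j < 2 * e, v ^ m * w i = w j → m = 0 ∧ i = j) ∧
    (∀ g : Gde 2 e 2, ∃! p : ℕ × ℕ, p.1 < 4 ∧ p.2 < 2 * e ∧ g = v ^ p.1 * w p.2) ∧
    IsHamCycle {r, s, t} (List.flatten (List.replicate 4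
      (List.flatten (List.replicate (e - 1) [r, s]) ++ [r, t]))) := by
  haveI : NeZero (2 * e) := ⟨by omega⟩
  have hswne : (Equiv.swap (0 : Fin 2) 1) ≠ 1 := by decide
  have hene : (e : ZMod (2 * e)) ≠ 0 := by
    have h1 : ((e : ℕ) : ZMod (2 * e)).val = e := ZMod.val_cast_of_lt (by omega)
    intro h; rw [h, ZMod.val_zero] at h1; omega
  have h2e0 : (e : ZMod (2 * e)) + e = 0 := by
    have h1 := ZMod.natCast_self (2 * e)
    push_cast at h1
    linear_combination h1
  have hrE : (r : W (2 * e) 2) = W.E 0 0 (Equiv.swap 0 1) := hr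
  have hsE : (s : W (2 * e) 2) = W.E (-1) 1 (Equiv.swap 0 1) := hs
  have htE : (t : W (2 * e) 2) = W.E (e : ZMod (2 * e)) 0 1 := ht
  have hrs : ((r * s : Gde 2 e 2) : W (2 * e) 2) = W.E 1 (-1) 1 := by
    rw [Subgroup.coe_mul, hrE, hsE, W.E_mul_swap, Equiv.swap_mul_self]
    norm_num
  have hpw : ∀ n : ℕ, (((r * s) ^ n : Gde 2 e 2) : W (2 * e) 2)
      = W.E (n : ZMod (2*e)) (-(n : ZMod (2*e))) 1 := by
    intro n
    rw [SubgroupClass.coe_pow, hrs, W.E_pow_one]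
    congr 1 <;> simp [nsmul_eq_mul]
  have hwe : ∀ i : ℕ, ((w (2 * i) : Gde 2 e 2) : W (2 * e) 2)
      = W.E (i : ZMod (2*e)) (-(i : ZMod (2*e))) 1 := by
    intro i; rw [hw1, hpw]
  have hwo : ∀ i : ℕ, ((w (2 * i + 1) : Gde 2 e 2) : W (2 * e) 2)
      = W.E (i : ZMod (2*e)) (-(i : ZMod (2*e))) (Equiv.swap 0 1) := by
    intro i
    rw [hw2, Subgroup.coe_mul, hpw, hrE, W.E_mul_one]
    simp
  have hvE : (v : W (2 * e) 2) = W.E ((e : ZMod (2 * e)) - 1) 1 (Equiv.swap 0 1) := by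
    rw [hv, Subgroup.coe_mul, Subgroup.coe_mul, hpw, hrE, htE, W.E_mul_one, W.E_mul_swap]
    rw [Nat.cast_sub (by omega : 1 ≤ e), Nat.cast_one]
    exact W.E_ext (by ring) (by ring) (one_mul _)
  -- powers of v
  have hv2E : ((v ^ 2 : Gde 2 e 2) : W (2 * e) 2)
      = W.E (e : ZMod (2 * e)) (e : ZMod (2 * e)) 1 := by
    rw [pow_two, Subgroup.coe_mul, hvE, W.E_mul_swap, Equiv.swap_mul_self]
    exact W.E_ext (by ring) (by ring) rfl
  have hv3E : ((v ^ 3 : Gde 2 e 2) : W (2 * e) 2)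
      = W.E (-1) ((e : ZMod (2 * e)) + 1) (Equiv.swap 0 1) := by
    rw [show (3 : ℕ) = 2 + 1 from rfl, pow_succ, Subgroup.coe_mul, hv2E, hvE, W.E_mul_one]
    exact W.E_ext (by linear_combination h2e0) rfl rfl
  have hv4 : v ^ 4 = 1 := by
    apply Subtype.ext
    rw [show (4 : ℕ) = 2 * 2 from rfl, pow_mul, SubgroupClass.coe_pow, hv2E, pow_two,
      W.E_mul_one, OneMemClass.coe_one, ← W.E_one]
    exact W.E_ext (by linear_combination h2e0) (by linear_combination h2e0) rfl
  -- the eight canonical forms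
  have hF00 : ∀ i : ℕ, ((v ^ 0 * w (2 * i) : Gde 2 e 2) : W (2 * e) 2)
      = W.E (i : ZMod (2*e)) (-(i : ZMod (2*e))) 1 := by
    intro i; rw [pow_zero, one_mul, hwe]
  have hF01 : ∀ i : ℕ, ((v ^ 0 * w (2 * i + 1) : Gde 2 e 2) : W (2 * e) 2)
      = W.E (i : ZMod (2*e)) (-(i : ZMod (2*e))) (Equiv.swap 0 1) := by
    intro i; rw [pow_zero, one_mul, hwo]
  have hF10 : ∀ i : ℕ, ((v ^ 1 * w (2 * i) : Gde 2 e 2) : W (2 * e) 2)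
      = W.E ((e : ZMod (2*e)) - 1 - (i : ZMod (2*e))) (1 + (i : ZMod (2*e)))
        (Equiv.swap 0 1) := by
    intro i
    rw [pow_one, Subgroup.coe_mul, hvE, hwe, W.E_mul_swap]
    exact W.E_ext (by ring) (by ring) (one_mul _)
  have hF11 : ∀ i : ℕ, ((v ^ 1 * w (2 * i + 1) : Gde 2 e 2) : W (2 * e) 2)
      = W.E ((e : ZMod (2*e)) - 1 - (i : ZMod (2*e))) (1 + (i : ZMod (2*e))) 1 := by
    intro i
    rw [pow_one, Subgroup.coe_mul, hvE, hwo, W.E_mul_swap, Equiv.swap_mul_self]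
    exact W.E_ext (by ring) (by ring) rfl
  have hF20 : ∀ i : ℕ, ((v ^ 2 * w (2 * i) : Gde 2 e 2) : W (2 * e) 2)
      = W.E ((e : ZMod (2*e)) + (i : ZMod (2*e))) ((e : ZMod (2*e)) - (i : ZMod (2*e))) 1 := by
    intro i
    rw [Subgroup.coe_mul, hv2E, hwe, W.E_mul_one]
    exact W.E_ext (by ring) (by ring) rfl
  have hF21 : ∀ i : ℕ, ((v ^ 2 * w (2 * i + 1) : Gde 2 e 2) : W (2 * e) 2)
      = W.E ((e : ZMod (2*e)) + (i : ZMod (2*e))) ((e : ZMod (2*e)) - (i : ZMod (2*e)))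
        (Equiv.swap 0 1) := by
    intro i
    rw [Subgroup.coe_mul, hv2E, hwo, W.E_mul_one]
    exact W.E_ext (by ring) (by ring) rfl
  have hF30 : ∀ i : ℕ, ((v ^ 3 * w (2 * i) : Gde 2 e 2) : W (2 * e) 2)
      = W.E (-1 - (i : ZMod (2*e))) ((e : ZMod (2*e)) + 1 + (i : ZMod (2*e)))
        (Equiv.swap 0 1) := by
    intro i
    rw [Subgroup.coe_mul, hv3E, hwe, W.E_mul_swap]
    exact W.E_ext (by ring) (by ring) (one_mul _)
  have hF31 : ∀ i : ℕ, ((v ^ 3 * w (2 * i + 1) : Gde 2 e 2) : W (2 * e) 2)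
      = W.E (-1 - (i : ZMod (2*e))) ((e : ZMod (2*e)) + 1 + (i : ZMod (2*e))) 1 := by
    intro i
    rw [Subgroup.coe_mul, hv3E, hwo, W.E_mul_swap, Equiv.swap_mul_self]
    exact W.E_ext (by ring) (by ring) rfl
  have h2ecast : ((2 * e : ℕ) : ZMod (2 * e)) = 0 := ZMod.natCast_self _
  have hdec : ∀ m < 4, ∀ k < 2 * e,
      dec e ((v ^ m * w k : Gde 2 e 2) : W (2 * e) 2) = (m, k) := by
    intro m hm k hk
    obtain ⟨i, c, hc, rfl⟩ : ∃ i c, c < 2 ∧ k = 2 * i + c :=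
      ⟨k / 2, k % 2, Nat.mod_lt _ (by omega), by omega⟩
    have hi : i < e := by omega
    have hvali : ((i : ℕ) : ZMod (2 * e)).val = i := ZMod.val_cast_of_lt (by omega)
    interval_cases c <;> interval_cases m
    · -- m = 0, c = 0
      rw [Nat.add_zero, hF00 i]
      have hsum : ((i : ℕ) : ZMod (2 * e)) + -((i : ℕ) : ZMod (2 * e)) = 0 := by ring
      simp only [dec, W.E_apply0, W.E_apply1, W.E_p, hsum, hvali, Prod.mk.injEq]
      simp [hi]
    · -- m = 1, c = 0
      rw [Nat.add_zero, hF10 i]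
      have hA : ((e - 1 - i : ℕ) : ZMod (2 * e))
          = (e : ZMod (2 * e)) - 1 - (i : ZMod (2 * e)) := by
        rw [Nat.cast_sub (by omega), Nat.cast_sub (by omega), Nat.cast_one]
      have hval : ((e : ZMod (2 * e)) - 1 - (i : ZMod (2 * e))).val = e - 1 - i := by
        rw [← hA]; exact ZMod.val_cast_of_lt (by omega)
      have hsum : ((e : ZMod (2 * e)) - 1 - (i : ZMod (2 * e)))
          + (1 + (i : ZMod (2 * e))) = (e : ZMod (2 * e)) := by ring
      simp only [dec, W.E_apply0, W.E_apply1, W.E_p, hval, hsum, Prod.mk.injEq]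
      simp [hene, hswne, show e - 1 - i < e by omega]
      omega
    · -- m = 2, c = 0
      rw [Nat.add_zero, hF20 i]
      have hA : ((e + i : ℕ) : ZMod (2 * e))
          = (e : ZMod (2 * e)) + (i : ZMod (2 * e)) := by push_cast; ring
      have hval : ((e : ZMod (2 * e)) + (i : ZMod (2 * e))).val = e + i := by
        rw [← hA]; exact ZMod.val_cast_of_lt (by omega)
      have hsum : ((e : ZMod (2 * e)) + (i : ZMod (2 * e)))
          + ((e : ZMod (2 * e)) - (i : ZMod (2 * e))) = 0 := by linear_combination h2e0
      simp only [dec, W.E_apply0, W.E_apply1, W.E_p, hval, hsum, Prod.mk.injEq]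
      simp [show ¬ (e + i < e) by omega]
    · -- m = 3, c = 0
      rw [Nat.add_zero, hF30 i]
      have hA : ((2 * e - 1 - i : ℕ) : ZMod (2 * e)) = -1 - (i : ZMod (2 * e)) := by
        rw [Nat.cast_sub (by omega), Nat.cast_sub (by omega), Nat.cast_one, h2ecast]
        ring
      have hval : (-1 - (i : ZMod (2 * e))).val = 2 * e - 1 - i := by
        rw [← hA]; exact ZMod.val_cast_of_lt (by omega)
      have hsum : (-1 - (i : ZMod (2 * e)))
          + ((e : ZMod (2 * e)) + 1 + (i : ZMod (2 * e))) = (e : ZMod (2 * e)) := by ring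
      simp only [dec, W.E_apply0, W.E_apply1, W.E_p, hval, hsum, Prod.mk.injEq]
      simp [hene, hswne, show ¬ (2 * e - 1 - i < e) by omega]
      omega
    · -- m = 0, c = 1
      rw [hF01 i]
      have hsum : ((i : ℕ) : ZMod (2 * e)) + -((i : ℕ) : ZMod (2 * e)) = 0 := by ring
      simp only [dec, W.E_apply0, W.E_apply1, W.E_p, hsum, hvali, Prod.mk.injEq]
      simp [hi, hswne]
    · -- m = 1, c = 1
      rw [hF11 i]
      have hA : ((e - 1 - i : ℕ) : ZMod (2 * e))
          = (e : ZMod (2 * e)) - 1 - (i : ZMod (2 * e)) := by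
        rw [Nat.cast_sub (by omega), Nat.cast_sub (by omega), Nat.cast_one]
      have hval : ((e : ZMod (2 * e)) - 1 - (i : ZMod (2 * e))).val = e - 1 - i := by
        rw [← hA]; exact ZMod.val_cast_of_lt (by omega)
      have hsum : ((e : ZMod (2 * e)) - 1 - (i : ZMod (2 * e)))
          + (1 + (i : ZMod (2 * e))) = (e : ZMod (2 * e)) := by ring
      simp only [dec, W.E_apply0, W.E_apply1, W.E_p, hval, hsum, Prod.mk.injEq]
      simp [hene, show e - 1 - i < e by omega]
      omega
    · -- m = 2, c = 1
      rw [hF21 i]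
      have hA : ((e + i : ℕ) : ZMod (2 * e))
          = (e : ZMod (2 * e)) + (i : ZMod (2 * e)) := by push_cast; ring
      have hval : ((e : ZMod (2 * e)) + (i : ZMod (2 * e))).val = e + i := by
        rw [← hA]; exact ZMod.val_cast_of_lt (by omega)
      have hsum : ((e : ZMod (2 * e)) + (i : ZMod (2 * e)))
          + ((e : ZMod (2 * e)) - (i : ZMod (2 * e))) = 0 := by linear_combination h2e0
      simp only [dec, W.E_apply0, W.E_apply1, W.E_p, hval, hsum, Prod.mk.injEq]
      simp [hswne, show ¬ (e + i < e) by omega]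
    · -- m = 3, c = 1
      rw [hF31 i]
      have hA : ((2 * e - 1 - i : ℕ) : ZMod (2 * e)) = -1 - (i : ZMod (2 * e)) := by
        rw [Nat.cast_sub (by omega), Nat.cast_sub (by omega), Nat.cast_one, h2ecast]
        ring
      have hval : (-1 - (i : ZMod (2 * e))).val = 2 * e - 1 - i := by
        rw [← hA]; exact ZMod.val_cast_of_lt (by omega)
      have hsum : (-1 - (i : ZMod (2 * e)))
          + ((e : ZMod (2 * e)) + 1 + (i : ZMod (2 * e))) = (e : ZMod (2 * e)) := by ring
      simp only [dec, W.E_apply0, W.E_apply1, W.E_p, hval, hsum, Prod.mk.injEq]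
      simp [hene, show ¬ (2 * e - 1 - i < e) by omega]
      omega
  have hcast2em1 : ∀ n : ℕ, n < 2 * e →
      ((2 * e - 1 - n : ℕ) : ZMod (2 * e)) = -1 - (n : ZMod (2 * e)) := by
    intro n hn
    rw [Nat.cast_sub (by omega), Nat.cast_sub (by omega), Nat.cast_one, h2ecast]
    ring
  have hcastem1 : ∀ n : ℕ, n < e →
      ((e - 1 - n : ℕ) : ZMod (2 * e)) = (e : ZMod (2 * e)) - 1 - (n : ZMod (2 * e)) := by
    intro n hn
    rw [Nat.cast_sub (by omega), Nat.cast_sub (by omega), Nat.cast_one]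
  have hgsum : ∀ g : Gde 2 e 2, ((g : W (2 * e) 2)).a 0 + ((g : W (2 * e) 2)).a 1 = 0
      ∨ ((g : W (2 * e) 2)).a 0 + ((g : W (2 * e) 2)).a 1 = (e : ZMod (2 * e)) := by
    intro g
    have hg : ZMod.castHom (dvd_mul_left e 2) (ZMod e)
        (∑ j, ((g : W (2 * e) 2)).a j) = 0 := g.2
    rw [Fin.sum_univ_two] at hg
    exact zmod_sum_cases (by omega) _ hg
  have hexist : ∀ g : Gde 2 e 2, ∃ m k, m < 4 ∧ k < 2 * e ∧ g = v ^ m * w k := by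
    intro g
    obtain ⟨a, b, p, hgE, hsum', hpp⟩ :
        ∃ a b p, (g : W (2 * e) 2) = W.E a b p ∧ (a + b = 0 ∨ a + b = (e : ZMod (2 * e)))
          ∧ (p = 1 ∨ p = Equiv.swap 0 1) := by
      refine ⟨(g : W (2 * e) 2).a 0, (g : W (2 * e) 2).a 1, (g : W (2 * e) 2).p,
        W.ext' (funext fun j => by fin_cases j <;> rfl) rfl, hgsum g, W.perm_fin_two _⟩
    have haval : ((a.val : ℕ) : ZMod (2 * e)) = a := by rw [ZMod.natCast_val, ZMod.cast_id]
    have hav2 : a.val < 2 * e := ZMod.val_lt a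
    rcases hpp with hp | hp <;> rcases hsum' with hsum | hsum <;>
      rcases Nat.lt_or_ge a.val e with hlt | hlt
    · refine ⟨0, 2 * a.val, by omega, by omega, Subtype.ext ?_⟩
      rw [hF00, hgE]
      exact W.E_ext haval.symm (by linear_combination hsum + haval) hp
    · refine ⟨2, 2 * (a.val - e), by omega, by omega, Subtype.ext ?_⟩
      rw [hF20, hgE]
      refine W.E_ext ?_ ?_ hp
      · rw [Nat.cast_sub hlt, haval]; ring
      · rw [Nat.cast_sub hlt, haval]; linear_combination hsum - h2e0
    · refine ⟨1, 2 * (e - 1 - a.val) + 1, by omega, by omega, Subtype.ext ?_⟩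
      rw [hF11, hgE]
      refine W.E_ext ?_ ?_ hp
      · rw [hcastem1 _ (by omega), haval]; ring
      · rw [hcastem1 _ (by omega), haval]; linear_combination hsum
    · refine ⟨3, 2 * (2 * e - 1 - a.val) + 1, by omega, by omega, Subtype.ext ?_⟩
      rw [hF31, hgE]
      refine W.E_ext ?_ ?_ hp
      · rw [hcast2em1 _ (by omega), haval]; ring
      · rw [hcast2em1 _ (by omega), haval]; linear_combination hsum
    · refine ⟨0, 2 * a.val + 1, by omega, by omega, Subtype.ext ?_⟩
      rw [hF01, hgE]
      exact W.E_ext haval.symm (by linear_combination hsum + haval) hp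
    · refine ⟨2, 2 * (a.val - e) + 1, by omega, by omega, Subtype.ext ?_⟩
      rw [hF21, hgE]
      refine W.E_ext ?_ ?_ hp
      · rw [Nat.cast_sub hlt, haval]; ring
      · rw [Nat.cast_sub hlt, haval]; linear_combination hsum - h2e0
    · refine ⟨1, 2 * (e - 1 - a.val), by omega, by omega, Subtype.ext ?_⟩
      rw [hF10, hgE]
      refine W.E_ext ?_ ?_ hp
      · rw [hcastem1 _ (by omega), haval]; ring
      · rw [hcastem1 _ (by omega), haval]; linear_combination hsum
    · refine ⟨3, 2 * (2 * e - 1 - a.val), by omega, by omega, Subtype.ext ?_⟩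
      rw [hF30, hgE]
      refine W.E_ext ?_ ?_ hp
      · rw [hcast2em1 _ (by omega), haval]; ring
      · rw [hcast2em1 _ (by omega), haval]; linear_combination hsum
  have hdec' : ∀ (g : Gde 2 e 2) (q : ℕ × ℕ), q.1 < 4 → q.2 < 2 * e →
      g = v ^ q.1 * w q.2 → q = dec e (g : W (2 * e) 2) := by
    intro g q h1 h2 h3
    rw [h3]
    exact (hdec q.1 h1 q.2 h2).symm
  refine ⟨?_, ?_, ?_⟩
  · -- Part 1
    intro m hm i hi j hj heq
    have e1 := hdec m hm i hi
    have e2 := hdec 0 (by omega) j hj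
    rw [pow_zero, one_mul] at e2
    rw [heq] at e1
    have h := e1.symm.trans e2
    rw [Prod.mk.injEq] at h
    exact h
  · -- Part 2
    intro g
    obtain ⟨m, k, hm, hk, hg⟩ := hexist g
    refine ⟨(m, k), ⟨hm, hk, hg⟩, ?_⟩
    rintro q ⟨hq1, hq2, hq3⟩
    exact (hdec' g q hq1 hq2 hq3).trans (hdec' g (m, k) hm hk hg).symm
  · -- Part 3
    set L1 : List (Gde 2 e 2) := List.flatten (List.replicate (e - 1) [r, s]) with hL1
    set B : List (Gde 2 e 2) := L1 ++ [r, t] with hB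
    have hL1len : L1.length = (e - 1) * 2 := by
      rw [hL1, flatten_replicate_length]; simp
    have hBlen : B.length = 2 * e := by
      rw [hB, List.length_append, hL1len]; simp; omega
    have hBprod : B.prod = v := by
      rw [hB, List.prod_append, hL1, flatten_replicate_prod, hv]
      simp [mul_assoc]
    have htakeB : ∀ j < 2 * e, (B.take j).prod = (w j : Gde 2 e 2) := by
      intro j hj
      obtain ⟨i, c, hc, rfl⟩ : ∃ i c, c < 2 ∧ j = 2 * i + c :=
        ⟨j / 2, j % 2, Nat.mod_lt _ (by omega), by omega⟩
      have hi : i < e := by omega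
      interval_cases c
      · have h0 : 2 * i + 0 - L1.length = 0 := by omega
        rw [hB, List.take_append, h0, List.take_zero, List.append_nil,
          Nat.add_zero, hL1, take_even r s i (e - 1) (by omega), flatten_replicate_prod,
          hw1]
        simp
      · rcases Nat.lt_or_ge i (e - 1) with hie | hie
        · have h0 : 2 * i + 1 - L1.length = 0 := by omega
          rw [hB, List.take_append, h0, List.take_zero, List.append_nil,
            hL1, take_odd r s i (e - 1) hie, List.prod_append, flatten_replicate_prod,
            hw2]
          simp
        · have hieq : i = e - 1 := by omega
          subst hieq
          have h1 : 2 * (e - 1) + 1 - L1.length = 1 := by omega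
          rw [hB, List.take_append, h1,
            List.take_of_length_le (by omega), hw2]
          rw [show (List.take 1 [r, t]) = [r] from rfl, List.prod_append, hL1,
            flatten_replicate_prod]
          simp
    have hLlen : (List.flatten (List.replicate 4 B)).length = 8 * e := by
      rw [flatten_replicate_length, hBlen]; omega
    have htake : ∀ k < 8 * e, ((List.flatten (List.replicate 4 B)).take k).prod
        = v ^ (k / (2 * e)) * w (k % (2 * e)) := by
      intro k hk
      have hq : k / (2 * e) < 4 := (Nat.div_lt_iff_lt_mul (by omega)).mpr (by omega)
      have hrm : k % (2 * e) < 2 * e := Nat.mod_lt _ (by omega)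
      have hdm := Nat.div_add_mod k (2 * e)
      have hk' : k = (k / (2 * e)) * B.length + k % (2 * e) := by
        rw [hBlen, mul_comm]; omega
      conv_lhs => rw [hk']
      rw [take_flatten_replicate B _ _ _ hq (by rw [hBlen]; omega), List.prod_append,
        flatten_replicate_prod, hBprod, htakeB _ hrm]
    have hcard : Nat.card (Gde 2 e 2) = 8 * e := by
      have hbij : Function.Bijective
          (fun q : Fin 4 × Fin (2 * e) => (v ^ (q.1 : ℕ) * w (q.2 : ℕ) : Gde 2 e 2)) := by
        constructor
        · intro q1 q2 hq
          have e1 := hdec (q1.1 : ℕ) q1.1.isLt (q1.2 : ℕ) q1.2.isLt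
          have e2 := hdec (q2.1 : ℕ) q2.1.isLt (q2.2 : ℕ) q2.2.isLt
          have hq' : (v ^ (q1.1 : ℕ) * w (q1.2 : ℕ) : Gde 2 e 2)
              = v ^ (q2.1 : ℕ) * w (q2.2 : ℕ) := hq
          rw [hq'] at e1
          have h := e1.symm.trans e2
          rw [Prod.mk.injEq] at h
          exact Prod.ext (Fin.val_injective h.1) (Fin.val_injective h.2)
        · intro g
          obtain ⟨m, k, hm, hk, hg⟩ := hexist g
          exact ⟨(⟨m, hm⟩, ⟨k, hk⟩), hg.symm⟩
      have h1 := Nat.card_eq_of_bijective _ hbij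
      have h2 : Nat.card (Fin 4 × Fin (2 * e)) = 8 * e := by
        simp [Nat.card_eq_fintype_card]; omega
      rw [← h1, h2]
    unfold IsHamCycle
    refine ⟨?_, ?_, ?_, ?_⟩
    · intro x hx
      left
      have hxrst : x = r ∨ x = s ∨ x = t := by
        simp only [List.mem_flatten, List.mem_replicate] at hx
        obtain ⟨l, ⟨_, rfl⟩, hxl⟩ := hx
        rw [hB, hL1] at hxl
        simp only [List.mem_append, List.mem_flatten, List.mem_replicate] at hxl
        rcases hxl with ⟨l2, ⟨_, rfl⟩, hxl2⟩ | h
        · simp at hxl2; tauto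
        · simp at h; tauto
      rcases hxrst with rfl | rfl | rfl <;> simp
    · rw [flatten_replicate_prod, hBprod]
      exact hv4
    · rw [hLlen, hcard]
    · rw [hLlen]
      refine List.Nodup.map_on ?_ List.nodup_range
      intro x hx y hy hxy
      rw [List.mem_range] at hx hy
      rw [htake x hx, htake y hy] at hxy
      have e1 := hdec (x / (2 * e)) ((Nat.div_lt_iff_lt_mul (by omega)).mpr (by omega))
        (x % (2 * e)) (Nat.mod_lt _ (by omega))
      have e2 := hdec (y / (2 * e)) ((Nat.div_lt_iff_lt_mul (by omega)).mpr (by omega))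
        (y % (2 * e)) (Nat.mod_lt _ (by omega))
      rw [hxy] at e1
      have h := e1.symm.trans e2
      rw [Prod.mk.injEq] at h
      have hx' := Nat.div_add_mod x (2 * e)
      have hy' := Nat.div_add_mod y (2 * e)
      rw [h.1, h.2] at hx'
      omega
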